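/- arXiv:0806.1325 — 2 statements merged into one kernel-verified Lean document; each statement's English description precedes it below -/
import Mathlib

section
/- H(α) = 0, the derivative of H at α equals 0, and the second derivative of H is strictly positive at every y > α. -/
open Real

noncomputable def HFJ (α β : ℝ) (y : ℝ) : ℝ :=
  β * α ^ (β + 1) * Real.exp (y - α) - β * α ^ (β + 1) - y ^ (β + 2)
    + y ^ (β + 1) * Real.exp (y - α) - y ^ (β + 1) + α ^ (β + 1) * y

noncomputable def D1F (α β y : ℝ) : ℝ :=
  β * α ^ (β+1) * Real.exp (y-α) - (β+2) * y ^ (β+1)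
    + (β+1) * y ^ β * Real.exp (y-α) + y ^ (β+1) * Real.exp (y-α)
    - (β+1) * y ^ β + α ^ (β+1)

noncomputable def SF (α β y : ℝ) : ℝ :=
  β * α ^ (β+1) + β*(β+1) * y ^ (β-1) + 2*(β+1) * y ^ β + y ^ (β+1)

noncomputable def TF (β y : ℝ) : ℝ :=
  (β+1)*(β+2) * y ^ β + β*(β+1) * y ^ (β-1)

noncomputable def NF (α β y : ℝ) : ℝ := Real.exp (y-α) * SF α β y - TF β y

noncomputable def SDF (β y : ℝ) : ℝ :=
  (β+1) * y ^ β + 2*β*(β+1) * y ^ (β-1) + β*(β-1)*(β+1) * y ^ (β-2)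

noncomputable def TDF (β y : ℝ) : ℝ :=
  β*(β+1)*(β+2) * y ^ (β-1) + β*(β-1)*(β+1) * y ^ (β-2)

lemma hexp (α y : ℝ) : HasDerivAt (fun y : ℝ => Real.exp (y - α)) (Real.exp (y - α)) y := by
  simpa [Function.comp_def] using (Real.hasDerivAt_exp (y - α)).comp y ((hasDerivAt_id y).sub_const α)

lemma hasDerivAt_HFJ (α β : ℝ) (hβ : 0 ≤ β) (y : ℝ) :
    HasDerivAt (HFJ α β) (D1F α β y) y := by
  have h1 : HasDerivAt (fun y : ℝ => y ^ (β+1)) ((β+1) * y ^ β) y := by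
    have := Real.hasDerivAt_rpow_const (p := β+1) (x := y) (Or.inr (by linarith))
    have e : β + 1 - 1 = β := by ring
    rwa [e] at this
  have h2 : HasDerivAt (fun y : ℝ => y ^ (β+2)) ((β+2) * y ^ (β+1)) y := by
    have := Real.hasDerivAt_rpow_const (p := β+2) (x := y) (Or.inr (by linarith))
    have e : β + 2 - 1 = β + 1 := by ring
    rwa [e] at this
  have he := hexp α y
  have h : HasDerivAt (HFJ α β)
      ((β * α ^ (β+1)) * Real.exp (y-α) - 0 - (β+2) * y ^ (β+1)
        + ((β+1) * y ^ β * Real.exp (y-α) + y ^ (β+1) * Real.exp (y-α))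
        - (β+1) * y ^ β + α ^ (β+1) * 1) y := by
    exact (((((he.const_mul (β * α ^ (β+1))).sub (hasDerivAt_const y (β * α ^ (β+1)))).sub
      h2).add (h1.mul he)).sub h1).add ((hasDerivAt_id y).const_mul (α ^ (β+1)))
  convert h using 1
  unfold D1F; ring

lemma deriv_HFJ (α β : ℝ) (hβ : 0 ≤ β) : deriv (HFJ α β) = D1F α β :=
  funext fun y => (hasDerivAt_HFJ α β hβ y).deriv

lemma hasDerivAt_D1F (α β : ℝ) {y : ℝ} (hy : y ≠ 0) :
    HasDerivAt (D1F α β) (NF α β y) y := by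
  have h1 : HasDerivAt (fun y : ℝ => y ^ (β+1)) ((β+1) * y ^ β) y := by
    have := Real.hasDerivAt_rpow_const (p := β+1) (x := y) (Or.inl hy)
    have e : β + 1 - 1 = β := by ring
    rwa [e] at this
  have h0 : HasDerivAt (fun y : ℝ => y ^ β) (β * y ^ (β-1)) y :=
    Real.hasDerivAt_rpow_const (p := β) (x := y) (Or.inl hy)
  have he := hexp α y
  have h : HasDerivAt (D1F α β)
      ((β * α ^ (β+1)) * Real.exp (y-α) - (β+2) * ((β+1) * y ^ β)
        + (((β+1) * (β * y ^ (β-1))) * Real.exp (y-α) + ((β+1) * y ^ β) * Real.exp (y-α))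
        + (((β+1) * y ^ β) * Real.exp (y-α) + y ^ (β+1) * Real.exp (y-α))
        - (β+1) * (β * y ^ (β-1)) + 0) y := by
    exact (((((he.const_mul (β * α ^ (β+1))).sub (h1.const_mul (β+2))).add
      (((h0.const_mul (β+1)).mul he))).add (h1.mul he)).sub (h0.const_mul (β+1))).add
      (hasDerivAt_const y (α ^ (β+1)))
  convert h using 1
  unfold NF SF TF; ring

lemma hasDerivAt_NF (α β : ℝ) {y : ℝ} (hy : y ≠ 0) :
    HasDerivAt (NF α β) (Real.exp (y-α) * (SF α β y + SDF β y) - TDF β y) y := by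
  have h1 : HasDerivAt (fun y : ℝ => y ^ (β+1)) ((β+1) * y ^ β) y := by
    have := Real.hasDerivAt_rpow_const (p := β+1) (x := y) (Or.inl hy)
    have e : β + 1 - 1 = β := by ring
    rwa [e] at this
  have h0 : HasDerivAt (fun y : ℝ => y ^ β) (β * y ^ (β-1)) y :=
    Real.hasDerivAt_rpow_const (p := β) (x := y) (Or.inl hy)
  have hm1 : HasDerivAt (fun y : ℝ => y ^ (β-1)) ((β-1) * y ^ (β-2)) y := by
    have := Real.hasDerivAt_rpow_const (p := β-1) (x := y) (Or.inl hy)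
    have e : β - 1 - 1 = β - 2 := by ring
    rwa [e] at this
  have he := hexp α y
  have hS : HasDerivAt (SF α β)
      (0 + β*(β+1) * ((β-1) * y ^ (β-2)) + 2*(β+1) * (β * y ^ (β-1)) + (β+1) * y ^ β) y := by
    exact (((hasDerivAt_const y (β * α ^ (β+1))).add (hm1.const_mul (β*(β+1)))).add
      (h0.const_mul (2*(β+1)))).add h1
  have hT : HasDerivAt (TF β)
      ((β+1)*(β+2) * (β * y ^ (β-1)) + β*(β+1) * ((β-1) * y ^ (β-2))) y :=
    (h0.const_mul ((β+1)*(β+2))).add (hm1.const_mul (β*(β+1)))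
  have h : HasDerivAt (NF α β)
      ((Real.exp (y-α) * SF α β y + Real.exp (y-α) *
        (0 + β*(β+1) * ((β-1) * y ^ (β-2)) + 2*(β+1) * (β * y ^ (β-1)) + (β+1) * y ^ β))
       - ((β+1)*(β+2) * (β * y ^ (β-1)) + β*(β+1) * ((β-1) * y ^ (β-2)))) y :=
    (he.mul hS).sub hT
  convert h using 1
  unfold SDF TDF; ring

lemma key_ineq (β y t : ℝ) (hβ : 0 ≤ β) (hβy : β < y) (h0y : 0 < y) (ht : 0 ≤ t)
    (hty : t < y) :
    0 < Real.exp t * (y^2 + 2*β*y + β*(β-1)) + ((β+2)*y^2 - β*(β+1)*y - β*(β-1)) := by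
  set E := Real.exp t with hE
  have hE1 : 1 ≤ E := Real.one_le_exp ht
  have hb : β*(β-1) < (β+3)*y := by nlinarith
  have hQR : 0 < (y^2 + 2*β*y + β*(β-1)) + ((β+2)*y^2 - β*(β+1)*y - β*(β-1)) := by
    nlinarith [mul_pos h0y (sub_pos.2 hb)]
  rcases le_or_gt 0 (y^2 + 2*β*y + β*(β-1)) with hQ | hQ
  · nlinarith [mul_nonneg (sub_nonneg.2 hE1) hQ]
  · have hβpos : 0 < β := by nlinarith
    have hβ1 : β < 1 := by nlinarith
    have hy1 : y < 1 := by nlinarith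
    have ht1 : t < 1 := lt_trans hty hy1
    have hE3 : E < 3 := by
      have h1 : E < Real.exp 1 := Real.exp_lt_exp.2 ht1
      have h2 : Real.exp 1 < 2.7182818286 := Real.exp_one_lt_d9
      linarith
    have hinv : 1 - t ≤ (Real.exp t)⁻¹ := by
      have := Real.add_one_le_exp (-t)
      rwa [Real.exp_neg, neg_add_eq_sub] at this
    have h1tE : (1-t)*E ≤ 1 := by
      have hEpos : 0 < E := Real.exp_pos t
      calc (1-t)*E ≤ (Real.exp t)⁻¹ * E := by
            apply mul_le_mul_of_nonneg_right hinv (le_of_lt hEpos)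
        _ = 1 := by rw [hE]; field_simp
    have h3t : E - 1 ≤ 3*t := by nlinarith
    have hnegQ : 0 < -(y^2 + 2*β*y + β*(β-1)) := by linarith
    have hQb : -(y^2 + 2*β*y + β*(β-1)) ≤ β := by nlinarith
    have hprod : (E-1) * (-(y^2 + 2*β*y + β*(β-1))) ≤ 3*t*β :=
      mul_le_mul h3t hQb (le_of_lt hnegQ) (by positivity)
    have htyβ : 3*t*β ≤ 3*y*β := by nlinarith
    have hb2 : β*(β+2) < (β+3)*y := by nlinarith
    nlinarith [mul_pos h0y (sub_pos.2 hb2)]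

lemma WF_pos (α β : ℝ) (hβ : 0 ≤ β) (hαβ : β < α) {y : ℝ} (hy : α ≤ y) :
    0 < Real.exp (y-α) * SDF β y + TF β y - TDF β y := by
  have h0y : 0 < y := lt_of_le_of_lt hβ (lt_of_lt_of_le hαβ hy)
  have hc : 0 < y ^ (β-2) := Real.rpow_pos_of_pos h0y _
  have e1 : y ^ (β-1) = y ^ (β-2) * y := by
    have e : β - 1 = (β - 2) + 1 := by ring
    rw [e, Real.rpow_add_one h0y.ne']
  have e0 : y ^ β = y ^ (β-2) * y * y := by
    have h := Real.rpow_add_one h0y.ne' (β-1)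
    have e : β - 1 + 1 = β := by ring
    rw [e] at h
    rw [h, e1]
  have hα0 : 0 < α := lt_of_le_of_lt hβ hαβ
  have hk := key_ineq β y (y-α) hβ (lt_of_lt_of_le hαβ hy) h0y (by linarith) (by linarith)
  have hrw : Real.exp (y-α) * SDF β y + TF β y - TDF β y
      = (β+1) * y ^ (β-2) * (Real.exp (y-α) * (y^2 + 2*β*y + β*(β-1))
        + ((β+2)*y^2 - β*(β+1)*y - β*(β-1))) := by
    unfold SDF TF TDF
    rw [e0, e1]; ring
  rw [hrw]
  exact mul_pos (mul_pos (by linarith) hc) hk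

lemma NF_pos (α β : ℝ) (hβ : 0 ≤ β) (hαβ : β < α) {y : ℝ} (hy : α < y) :
    0 < NF α β y := by
  have hα0 : 0 < α := lt_of_le_of_lt hβ hαβ
  have hNα : 0 < NF α β α := by
    unfold NF SF TF
    rw [sub_self, Real.exp_zero]
    have e1 : α ^ (β+1) = α ^ β * α := Real.rpow_add_one hα0.ne' β
    rw [e1]
    have hp : 0 < α ^ β := Real.rpow_pos_of_pos hα0 β
    nlinarith [mul_pos hp (sub_pos.2 hαβ)]
  set g : ℝ → ℝ := fun z => Real.exp (-z) * NF α β z with hg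
  have hgd : ∀ z ∈ Set.Ici α, HasDerivAt g
      (Real.exp (-z) * (Real.exp (z-α) * SDF β z + TF β z - TDF β z)) z := by
    intro z hz
    have h0z : 0 < z := lt_of_lt_of_le hα0 hz
    have hN := hasDerivAt_NF α β h0z.ne'
    have hE : HasDerivAt (fun z : ℝ => Real.exp (-z)) (-Real.exp (-z)) z := by
      simpa [Function.comp_def] using (Real.hasDerivAt_exp (-z)).comp z (hasDerivAt_neg z)
    have h := hE.fun_mul hN
    convert h using 1
    all_goals try rfl
    unfold NF; ring
  have hmono : StrictMonoOn g (Set.Ici α) := by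
    apply strictMonoOn_of_deriv_pos (convex_Ici α)
    · exact fun z hz => ((hgd z hz).continuousAt).continuousWithinAt
    · intro z hz
      rw [interior_Ici] at hz
      rw [(hgd z (Set.mem_Ici.mpr (le_of_lt hz))).deriv]
      exact mul_pos (Real.exp_pos _) (WF_pos α β hβ hαβ (le_of_lt hz))
  have hlt := hmono (Set.self_mem_Ici) (le_of_lt hy : α ≤ y) hy
  have h1 : 0 < Real.exp (-α) * NF α β α := mul_pos (Real.exp_pos _) hNα
  have h2 : 0 < Real.exp (-y) * NF α β y := lt_trans h1 hlt
  nlinarith [Real.exp_pos (-y), h2]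

theorem stmt_8 (α β : ℝ) (hβ : 0 ≤ β) (hαβ : β < α) :
    HFJ α β α = 0 ∧ deriv (HFJ α β) α = 0 ∧
    ∀ y : ℝ, α < y → 0 < deriv (deriv (HFJ α β)) y := by
  have hα0 : 0 < α := lt_of_le_of_lt hβ hαβ
  refine ⟨?_, ?_, ?_⟩
  · unfold HFJ
    rw [sub_self, Real.exp_zero]
    have e2 : α ^ (β+2) = α ^ (β+1) * α := by
      have e : β + 2 = (β + 1) + 1 := by ring
      rw [e, Real.rpow_add_one hα0.ne']
    rw [e2]; ring
  · rw [deriv_HFJ α β hβ]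
    unfold D1F
    rw [sub_self, Real.exp_zero]
    ring
  · intro y hy
    have h0y : 0 < y := lt_trans hα0 hy
    rw [deriv_HFJ α β hβ, (hasDerivAt_D1F α β h0y.ne').deriv]
    exact NF_pos α β hβ hαβ hy
end

section
/- There exist constants 0 < c ≤ C and r₀ > 1 such that for all r ≥ r₀, c·ρ(r)^(2(β+1)n/(β+2)) ≤ V(r) ≤ C·ρ(r)^(2(β+1)n/(β+2)). -/
open Real

noncomputable def rhoFJ (α β : ℝ) (r : ℝ) : ℝ :=
  ∫ t in (0:ℝ)..r, Real.sqrt ((α + Real.log (1 + t ^ 2)) ^ β / (α ^ β * (1 + t ^ 2)))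

noncomputable def VFJ (n : ℕ) (α β : ℝ) (r : ℝ) : ℝ :=
  ∫ t in (0:ℝ)..r,
    ((α + Real.log (1 + t ^ 2)) ^ β / (α ^ β * (1 + t ^ 2))) *
      (((α + Real.log (1 + t ^ 2)) ^ (β + 1) - α ^ (β + 1)) / ((β + 1) * α ^ β * t ^ 2))
        ^ (n - 1) * t ^ (2 * n - 1)

lemma hasDerivAt_L (t : ℝ) : HasDerivAt (fun t : ℝ => Real.log (1 + t^2)) (2*t/(1+t^2)) t := by
  have h := ((hasDerivAt_pow 2 t).const_add 1).log (by positivity)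
  simpa using h

lemma aL_pos {α β : ℝ} (hβ : 0 ≤ β) (hαβ : β < α) (t : ℝ) :
    0 < α + Real.log (1 + t^2) := by
  have h1 : 0 ≤ Real.log (1 + t^2) := Real.log_nonneg (by nlinarith [sq_nonneg t])
  linarith

lemma hasDerivAt_F {α β : ℝ} (hβ : 0 ≤ β) (hαβ : β < α) (n : ℕ) (hn : 2 ≤ n) (t : ℝ) :
    HasDerivAt (fun t : ℝ => (((α + Real.log (1+t^2))^(β+1) - α^(β+1)) / ((β+1)*α^β))^n / (2*n))
      (((α + Real.log (1 + t ^ 2)) ^ β / (α ^ β * (1 + t ^ 2))) *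
      (((α + Real.log (1 + t ^ 2)) ^ (β + 1) - α ^ (β + 1)) / ((β + 1) * α ^ β * t ^ 2))
        ^ (n - 1) * t ^ (2 * n - 1)) t := by
  have hα : 0 < α := lt_of_le_of_lt hβ hαβ
  have hL := (hasDerivAt_L t).const_add α
  have hpos := aL_pos hβ hαβ t
  have h2 : HasDerivAt (fun t : ℝ => (α + Real.log (1+t^2))^(β+1))
      ((2*t/(1+t^2)) * (β+1) * (α + Real.log (1+t^2))^β) t := by
    have := hL.rpow_const (p := β+1) (Or.inl hpos.ne')
    simpa using this
  have h3 := (((h2.sub_const (α^(β+1))).div_const ((β+1)*α^β)).pow n).div_const (2*n)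
  refine h3.congr_deriv ?_
  symm
  have hab : (0:ℝ) < α ^ β := Real.rpow_pos_of_pos hα β
  have h1t : (0:ℝ) < 1 + t^2 := by positivity
  obtain ⟨m, rfl⟩ : ∃ m, n = m + 2 := ⟨n - 2, by omega⟩
  rcases eq_or_ne t 0 with rfl | ht
  · simp [Real.log_one]
  · have e1 : 2 * (m+2) - 1 = 2*m + 3 := by omega
    have e2 : (m+2) - 1 = m + 1 := by omega
    rw [e1, e2]
    rw [div_pow, div_pow]
    have h4 : ((β+1) * α^β * t^2)^(m+1) = ((β+1)*α^β)^(m+1) * (t^2)^(m+1) := by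
      rw [mul_pow]
    rw [h4]
    have e3 : t ^ (2*m+3) = (t^2)^(m+1) * t := by
      rw [← pow_mul, ← pow_succ]; congr 1
    rw [e3]
    field_simp

lemma integrand_eq {α β : ℝ} (hβ : 0 ≤ β) (hαβ : β < α) (n : ℕ) (hn : 2 ≤ n) (t : ℝ) :
    ((α + Real.log (1 + t ^ 2)) ^ β / (α ^ β * (1 + t ^ 2))) *
      (((α + Real.log (1 + t ^ 2)) ^ (β + 1) - α ^ (β + 1)) / ((β + 1) * α ^ β * t ^ 2))
        ^ (n - 1) * t ^ (2 * n - 1)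
    = (α + Real.log (1 + t ^ 2)) ^ β *
        (((α + Real.log (1 + t ^ 2)) ^ (β + 1) - α ^ (β + 1)) / ((β + 1) * α ^ β)) ^ (n-1)
        * t / (α ^ β * (1 + t ^ 2)) := by
  have hα : 0 < α := lt_of_le_of_lt hβ hαβ
  have hab : (0:ℝ) < α ^ β := Real.rpow_pos_of_pos hα β
  have h1t : (0:ℝ) < 1 + t^2 := by positivity
  obtain ⟨m, rfl⟩ : ∃ m, n = m + 2 := ⟨n - 2, by omega⟩
  rcases eq_or_ne t 0 with rfl | ht
  · simp [Real.log_one]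
  · have e1 : 2 * (m+2) - 1 = 2*m + 3 := by omega
    have e2 : (m+2) - 1 = m + 1 := by omega
    rw [e1, e2, div_pow, div_pow]
    have h4 : ((β+1) * α^β * t^2)^(m+1) = ((β+1)*α^β)^(m+1) * (t^2)^(m+1) := by
      rw [mul_pow]
    rw [h4]
    have e3 : t ^ (2*m+3) = (t^2)^(m+1) * t := by
      rw [← pow_mul, ← pow_succ]; congr 1
    rw [e3]
    field_simp

lemma integrand_cont {α β : ℝ} (hβ : 0 ≤ β) (hαβ : β < α) (n : ℕ) :
    Continuous (fun t : ℝ => (α + Real.log (1 + t ^ 2)) ^ β *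
        (((α + Real.log (1 + t ^ 2)) ^ (β + 1) - α ^ (β + 1)) / ((β + 1) * α ^ β)) ^ (n-1)
        * t / (α ^ β * (1 + t ^ 2))) := by
  have hc0 : Continuous (fun t : ℝ => 1 + t^2) := by continuity
  have hcL : Continuous (fun t : ℝ => α + Real.log (1 + t^2)) :=
    continuous_const.add (hc0.log (fun t => by positivity))
  have hc1 : Continuous (fun t : ℝ => (α + Real.log (1 + t^2)) ^ β) :=
    hcL.rpow_const (fun t => Or.inr hβ)
  have hc2 : Continuous (fun t : ℝ => (α + Real.log (1 + t^2)) ^ (β+1)) :=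
    hcL.rpow_const (fun t => Or.inr (by linarith))
  exact ((hc1.mul (((hc2.sub continuous_const).div_const _).pow _)).mul continuous_id).div
    (continuous_const.mul hc0) (fun t => by
      have hα : 0 < α := lt_of_le_of_lt hβ hαβ
      have hab : (0:ℝ) < α ^ β := Real.rpow_pos_of_pos hα β
      positivity)

lemma VFJ_eq {α β : ℝ} (hβ : 0 ≤ β) (hαβ : β < α) (n : ℕ) (hn : 2 ≤ n) (r : ℝ) :
    VFJ n α β r =
      (((α + Real.log (1+r^2))^(β+1) - α^(β+1)) / ((β+1)*α^β))^n / (2*n) := by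
  have hInt : IntervalIntegrable (fun t : ℝ =>
      ((α + Real.log (1 + t ^ 2)) ^ β / (α ^ β * (1 + t ^ 2))) *
      (((α + Real.log (1 + t ^ 2)) ^ (β + 1) - α ^ (β + 1)) / ((β + 1) * α ^ β * t ^ 2))
        ^ (n - 1) * t ^ (2 * n - 1)) MeasureTheory.volume 0 r := by
    have he : (fun t : ℝ =>
      ((α + Real.log (1 + t ^ 2)) ^ β / (α ^ β * (1 + t ^ 2))) *
      (((α + Real.log (1 + t ^ 2)) ^ (β + 1) - α ^ (β + 1)) / ((β + 1) * α ^ β * t ^ 2))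
        ^ (n - 1) * t ^ (2 * n - 1)) = (fun t : ℝ =>
        (α + Real.log (1 + t ^ 2)) ^ β *
        (((α + Real.log (1 + t ^ 2)) ^ (β + 1) - α ^ (β + 1)) / ((β + 1) * α ^ β)) ^ (n-1)
        * t / (α ^ β * (1 + t ^ 2))) := funext (integrand_eq hβ hαβ n hn)
    rw [he]
    exact (integrand_cont hβ hαβ n).intervalIntegrable 0 r
  have key := intervalIntegral.integral_eq_sub_of_hasDerivAt
    (fun t _ => hasDerivAt_F hβ hαβ n hn t) hInt
  rw [VFJ, key]
  have hn0 : n ≠ 0 := by omega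
  simp [Real.log_one, zero_pow hn0]

lemma s_eq {α β : ℝ} (hβ : 0 ≤ β) (hαβ : β < α) (t : ℝ) :
    Real.sqrt ((α + Real.log (1 + t ^ 2)) ^ β / (α ^ β * (1 + t ^ 2)))
      = (α + Real.log (1 + t^2)) ^ (β/2) / (α ^ (β/2) * Real.sqrt (1 + t^2)) := by
  have hα : 0 < α := lt_of_le_of_lt hβ hαβ
  have hpos := aL_pos hβ hαβ t
  have hsq : ∀ x : ℝ, 0 ≤ x → Real.sqrt (x ^ β) = x ^ (β/2) := by
    intro x hx
    rw [Real.sqrt_eq_rpow, ← Real.rpow_mul hx]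
    congr 1; ring
  rw [Real.sqrt_div (Real.rpow_nonneg hpos.le β),
    Real.sqrt_mul (Real.rpow_nonneg hα.le β), hsq _ hpos.le, hsq _ hα.le]

lemma s_cont {α β : ℝ} (hβ : 0 ≤ β) (hαβ : β < α) :
    Continuous (fun t : ℝ =>
      Real.sqrt ((α + Real.log (1 + t ^ 2)) ^ β / (α ^ β * (1 + t ^ 2)))) := by
  have hα : 0 < α := lt_of_le_of_lt hβ hαβ
  have hc0 : Continuous (fun t : ℝ => 1 + t^2) := by continuity
  have hcL : Continuous (fun t : ℝ => α + Real.log (1 + t^2)) :=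
    continuous_const.add (hc0.log (fun t => by positivity))
  have hc1 : Continuous (fun t : ℝ => (α + Real.log (1 + t^2)) ^ β) :=
    hcL.rpow_const (fun t => Or.inr hβ)
  exact (hc1.div (continuous_const.mul hc0) (fun t => by
    have hab : (0:ℝ) < α ^ β := Real.rpow_pos_of_pos hα β
    show α ^ β * (1 + t ^ 2) ≠ 0
    positivity)).sqrt

lemma g_cont {α β : ℝ} (hβ : 0 ≤ β) (hαβ : β < α) :
    Continuous (fun t : ℝ =>
      (α + Real.log (1 + t^2)) ^ (β/2) * (2*t/(1+t^2)) / α ^ (β/2)) := by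
  have hc0 : Continuous (fun t : ℝ => 1 + t^2) := by continuity
  have hcL : Continuous (fun t : ℝ => α + Real.log (1 + t^2)) :=
    continuous_const.add (hc0.log (fun t => by positivity))
  have hc1 : Continuous (fun t : ℝ => (α + Real.log (1 + t^2)) ^ (β/2)) :=
    hcL.rpow_const (fun t => Or.inr (by linarith))
  exact (hc1.mul ((continuous_const.mul continuous_id).div hc0 (fun t => by positivity))).div_const _

lemma hasDerivAt_G {α β : ℝ} (hβ : 0 ≤ β) (hαβ : β < α) (t : ℝ) :
    HasDerivAt (fun t : ℝ => (α + Real.log (1 + t^2)) ^ ((β+2)/2) * (2/((β+2) * α^(β/2))))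
      ((α + Real.log (1 + t^2)) ^ (β/2) * (2*t/(1+t^2)) / α ^ (β/2)) t := by
  have hα : 0 < α := lt_of_le_of_lt hβ hαβ
  have hpos := aL_pos hβ hαβ t
  have hL := (hasDerivAt_L t).const_add α
  have h2 := (hL.rpow_const (p := (β+2)/2) (Or.inl hpos.ne')).mul_const (2/((β+2) * α^(β/2)))
  have he : (β+2)/2 - 1 = β/2 := by ring
  rw [he] at h2
  refine h2.congr_deriv ?_
  symm
  have hab : (0:ℝ) < α ^ (β/2) := Real.rpow_pos_of_pos hα _
  field_simp

lemma s_upper {α β : ℝ} (hβ : 0 ≤ β) (hαβ : β < α) {t : ℝ} (ht : 1 ≤ t) :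
    Real.sqrt ((α + Real.log (1 + t ^ 2)) ^ β / (α ^ β * (1 + t ^ 2)))
      ≤ (α + Real.log (1 + t^2)) ^ (β/2) * (2*t/(1+t^2)) / α ^ (β/2) := by
  have hα : 0 < α := lt_of_le_of_lt hβ hαβ
  have hpos := aL_pos hβ hαβ t
  have hA : (0:ℝ) < (α + Real.log (1 + t^2)) ^ (β/2) := Real.rpow_pos_of_pos hpos _
  have hB : (0:ℝ) < α ^ (β/2) := Real.rpow_pos_of_pos hα _
  have h1t : (0:ℝ) < 1 + t^2 := by positivity
  have hst : Real.sqrt (1+t^2) ≤ 2*t := by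
    have h := Real.sqrt_le_sqrt (show (1+t^2) ≤ (2*t)^2 by nlinarith)
    rwa [Real.sqrt_sq (by linarith : (0:ℝ) ≤ 2*t)] at h
  have hst0 : 0 < Real.sqrt (1+t^2) := Real.sqrt_pos.mpr h1t
  have hsq : Real.sqrt (1+t^2) ^ 2 = 1 + t^2 := Real.sq_sqrt h1t.le
  rw [s_eq hβ hαβ]
  rw [div_le_div_iff₀ (by positivity) hB]
  have h5 : 1 ≤ 2*t/(1+t^2) * Real.sqrt (1+t^2) := by
    rw [div_mul_eq_mul_div, le_div_iff₀ h1t]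
    nlinarith
  calc (α + Real.log (1 + t^2)) ^ (β/2) * α ^ (β/2)
      = (α + Real.log (1 + t^2)) ^ (β/2) * α ^ (β/2) * 1 := by ring
    _ ≤ (α + Real.log (1 + t^2)) ^ (β/2) * α ^ (β/2) * (2*t/(1+t^2) * Real.sqrt (1+t^2)) :=
        mul_le_mul_of_nonneg_left h5 (mul_pos hA hB).le
    _ = (α + Real.log (1 + t^2)) ^ (β/2) * (2*t/(1+t^2)) * (α ^ (β/2) * Real.sqrt (1+t^2)) := by
        ring

lemma s_lower {α β : ℝ} (hβ : 0 ≤ β) (hαβ : β < α) {t : ℝ} (ht : 1 ≤ t) :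
    (α + Real.log (1 + t^2)) ^ (β/2) * (2*t/(1+t^2)) / α ^ (β/2) / 2
      ≤ Real.sqrt ((α + Real.log (1 + t ^ 2)) ^ β / (α ^ β * (1 + t ^ 2))) := by
  have hα : 0 < α := lt_of_le_of_lt hβ hαβ
  have hpos := aL_pos hβ hαβ t
  have hA : (0:ℝ) < (α + Real.log (1 + t^2)) ^ (β/2) := Real.rpow_pos_of_pos hpos _
  have hB : (0:ℝ) < α ^ (β/2) := Real.rpow_pos_of_pos hα _
  have h1t : (0:ℝ) < 1 + t^2 := by positivity
  have hst : t ≤ Real.sqrt (1+t^2) := by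
    have h := Real.sqrt_le_sqrt (show t^2 ≤ 1+t^2 by nlinarith)
    rwa [Real.sqrt_sq (by linarith : (0:ℝ) ≤ t)] at h
  have hst0 : 0 < Real.sqrt (1+t^2) := Real.sqrt_pos.mpr h1t
  have hsq : Real.sqrt (1+t^2) ^ 2 = 1 + t^2 := Real.sq_sqrt h1t.le
  rw [s_eq hβ hαβ]
  rw [div_div, div_le_div_iff₀ (by positivity) (by positivity)]
  have h5 : 2*t/(1+t^2) * Real.sqrt (1+t^2) ≤ 2 := by
    rw [div_mul_eq_mul_div, div_le_iff₀ h1t]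
    nlinarith
  calc (α + Real.log (1 + t^2)) ^ (β/2) * (2*t/(1+t^2)) * (α ^ (β/2) * Real.sqrt (1+t^2))
      = (α + Real.log (1 + t^2)) ^ (β/2) * α ^ (β/2) * (2*t/(1+t^2) * Real.sqrt (1+t^2)) := by
        ring
    _ ≤ (α + Real.log (1 + t^2)) ^ (β/2) * α ^ (β/2) * 2 :=
        mul_le_mul_of_nonneg_left h5 (mul_pos hA hB).le
    _ = (α + Real.log (1 + t^2)) ^ (β/2) * (α ^ (β/2) * 2) := by ring

lemma s_le_K {α β : ℝ} (hβ : 0 ≤ β) (hαβ : β < α) {t : ℝ} (ht : t ∈ Set.Icc (0:ℝ) 1) :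
    Real.sqrt ((α + Real.log (1 + t ^ 2)) ^ β / (α ^ β * (1 + t ^ 2)))
      ≤ Real.sqrt ((α + Real.log 2) ^ β / α ^ β) := by
  have hα : 0 < α := lt_of_le_of_lt hβ hαβ
  have hpos := aL_pos hβ hαβ t
  have hab : (0:ℝ) < α ^ β := Real.rpow_pos_of_pos hα β
  have h1t : (1:ℝ) ≤ 1 + t^2 := by nlinarith [sq_nonneg t]
  apply Real.sqrt_le_sqrt
  have hlog : Real.log (1 + t^2) ≤ Real.log 2 := by
    apply Real.log_le_log (by linarith)
    nlinarith [ht.1, ht.2, sq_nonneg t]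
  have hnum : (α + Real.log (1 + t^2)) ^ β ≤ (α + Real.log 2) ^ β :=
    Real.rpow_le_rpow hpos.le (by linarith) hβ
  calc (α + Real.log (1 + t ^ 2)) ^ β / (α ^ β * (1 + t ^ 2))
      ≤ (α + Real.log (1 + t ^ 2)) ^ β / (α ^ β * 1) := by
        apply div_le_div_of_nonneg_left (Real.rpow_nonneg hpos.le β) (by linarith)
        nlinarith
    _ = (α + Real.log (1 + t ^ 2)) ^ β / α ^ β := by rw [mul_one]
    _ ≤ (α + Real.log 2) ^ β / α ^ β := by gcongr
  
lemma rho_bounds {α β : ℝ} (hβ : 0 ≤ β) (hαβ : β < α) {r : ℝ} (hr : 1 ≤ r)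
    (h1 : 2 * (α + Real.log (1+1^2))^((β+2)/2) ≤ (α + Real.log (1+r^2))^((β+2)/2))
    (h2 : 2 * Real.sqrt ((α + Real.log 2) ^ β / α ^ β)
        ≤ 2/((β+2) * α^(β/2)) * (α + Real.log (1+r^2))^((β+2)/2)) :
    2/((β+2) * α^(β/2))/4 * (α + Real.log (1+r^2))^((β+2)/2) ≤ rhoFJ α β r ∧
    rhoFJ α β r ≤ 3/2 * (2/((β+2) * α^(β/2))) * (α + Real.log (1+r^2))^((β+2)/2) := by
  have hα : 0 < α := lt_of_le_of_lt hβ hαβ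
  have hc₀ : 0 < 2/((β+2) * α^(β/2)) := by
    have : (0:ℝ) < α ^ (β/2) := Real.rpow_pos_of_pos hα _
    positivity
  set c₀ := 2/((β+2) * α^(β/2)) with hc₀def
  set X : ℝ → ℝ := fun t => (α + Real.log (1+t^2))^((β+2)/2) with hX
  have hXnn : ∀ t, 0 ≤ X t := fun t => Real.rpow_nonneg (aL_pos hβ hαβ t).le _
  have hsint : ∀ a b : ℝ, IntervalIntegrable (fun t : ℝ =>
      Real.sqrt ((α + Real.log (1 + t ^ 2)) ^ β / (α ^ β * (1 + t ^ 2))))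
      MeasureTheory.volume a b := fun a b => (s_cont hβ hαβ).intervalIntegrable a b
  have hgint : ∀ a b : ℝ, IntervalIntegrable (fun t : ℝ =>
      (α + Real.log (1 + t^2)) ^ (β/2) * (2*t/(1+t^2)) / α ^ (β/2))
      MeasureTheory.volume a b := fun a b => (g_cont hβ hαβ).intervalIntegrable a b
  have hsplit : rhoFJ α β r =
      (∫ t in (0:ℝ)..1, Real.sqrt ((α + Real.log (1 + t ^ 2)) ^ β / (α ^ β * (1 + t ^ 2))))
      + ∫ t in (1:ℝ)..r, Real.sqrt ((α + Real.log (1 + t ^ 2)) ^ β / (α ^ β * (1 + t ^ 2))) :=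
    (intervalIntegral.integral_add_adjacent_intervals (hsint 0 1) (hsint 1 r)).symm
  have hFTC : (∫ t in (1:ℝ)..r, (α + Real.log (1 + t^2)) ^ (β/2) * (2*t/(1+t^2)) / α ^ (β/2))
      = X r * c₀ - X 1 * c₀ :=
    intervalIntegral.integral_eq_sub_of_hasDerivAt (fun t _ => hasDerivAt_G hβ hαβ t) (hgint 1 r)
  have hup : (∫ t in (1:ℝ)..r, Real.sqrt ((α + Real.log (1 + t ^ 2)) ^ β / (α ^ β * (1 + t ^ 2))))
      ≤ X r * c₀ - X 1 * c₀ := by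
    rw [← hFTC]
    exact intervalIntegral.integral_mono_on hr (hsint 1 r) (hgint 1 r)
      (fun t ht => s_upper hβ hαβ ht.1)
  have hdown : (X r * c₀ - X 1 * c₀)/2
      ≤ ∫ t in (1:ℝ)..r, Real.sqrt ((α + Real.log (1 + t ^ 2)) ^ β / (α ^ β * (1 + t ^ 2))) := by
    rw [← hFTC, ← intervalIntegral.integral_div]
    exact intervalIntegral.integral_mono_on hr ((hgint 1 r).div_const 2) (hsint 1 r)
      (fun t ht => s_lower hβ hαβ ht.1)
  have hI01nn : 0 ≤ ∫ t in (0:ℝ)..1,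
      Real.sqrt ((α + Real.log (1 + t ^ 2)) ^ β / (α ^ β * (1 + t ^ 2))) :=
    intervalIntegral.integral_nonneg (by norm_num) (fun t _ => Real.sqrt_nonneg _)
  have hI01K : (∫ t in (0:ℝ)..1,
      Real.sqrt ((α + Real.log (1 + t ^ 2)) ^ β / (α ^ β * (1 + t ^ 2))))
      ≤ Real.sqrt ((α + Real.log 2) ^ β / α ^ β) := by
    have := intervalIntegral.integral_mono_on (by norm_num : (0:ℝ) ≤ 1) (hsint 0 1)
      (intervalIntegrable_const) (fun t ht => s_le_K hβ hαβ ht)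
    simpa using this
  constructor
  · have h1' : 2 * X 1 ≤ X r := h1
    have hm := mul_le_mul_of_nonneg_left h1' hc₀.le
    have : c₀/4 * X r ≤ (X r * c₀ - X 1 * c₀)/2 := by
      linarith [hm, mul_comm c₀ (X 1), mul_comm c₀ (X r)]
    rw [hsplit]; linarith
  · rw [hsplit]
    have hX1 : 0 ≤ X 1 * c₀ := mul_nonneg (hXnn 1) hc₀.le
    have h2' : 2 * Real.sqrt ((α + Real.log 2) ^ β / α ^ β) ≤ c₀ * X r := h2
    linarith [hup, hI01K, h2', hX1, mul_comm c₀ (X r)]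

set_option maxHeartbeats 1000000 in
theorem stmt_16 (n : ℕ) (hn : 2 ≤ n) (α β : ℝ) (hβ : 0 ≤ β) (hαβ : β < α) :
    ∃ c C r₀ : ℝ, 0 < c ∧ c ≤ C ∧ 1 < r₀ ∧
      ∀ r : ℝ, r₀ ≤ r →
        c * rhoFJ α β r ^ (2 * (β + 1) * n / (β + 2)) ≤ VFJ n α β r ∧
        VFJ n α β r ≤ C * rhoFJ α β r ^ (2 * (β + 1) * n / (β + 2)) := by
  have hα : 0 < α := lt_of_le_of_lt hβ hαβ
  have hβ2 : (0:ℝ) < β + 2 := by linarith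
  have hβ1 : (0:ℝ) < β + 1 := by linarith
  have hαb2 : (0:ℝ) < α ^ (β/2) := Real.rpow_pos_of_pos hα _
  have hαb : (0:ℝ) < α ^ β := Real.rpow_pos_of_pos hα _
  set c₀ : ℝ := 2/((β+2) * α^(β/2)) with hc₀def
  have hc₀ : 0 < c₀ := by positivity
  set K : ℝ := Real.sqrt ((α + Real.log 2) ^ β / α ^ β) with hKdef
  have hK : 0 ≤ K := Real.sqrt_nonneg _
  set q : ℝ := (β+2)/2 with hqdef
  have hq : 0 < q := by positivity
  set p : ℝ := 2 * (β + 1) * n / (β + 2) with hpdef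
  have hp : 0 ≤ p := by positivity
  set E : ℝ := (β+1) * α^β with hEdef
  have hE : 0 < E := by positivity
  have hnR : (0:ℝ) < (n:ℝ) := by exact_mod_cast (by omega : 0 < n)
  set X1 : ℝ := (α + Real.log (1+1^2))^q with hX1def
  have hX1 : 0 ≤ X1 := Real.rpow_nonneg (aL_pos hβ hαβ 1).le _
  -- threshold
  set T : ℝ := max (max ((2 * X1) ^ q⁻¹) ((2*K/c₀) ^ q⁻¹)) ((2*α^(β+1)) ^ (β+1)⁻¹) with hTdef
  refine ⟨((3/2*c₀)^p * (2*E)^n * (2*n))⁻¹, ((c₀/4)^p * E^n * (2*n))⁻¹,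
    max 2 (Real.exp T), ?_, ?_, ?_, ?_⟩
  · have h32 : (0:ℝ) < (3/2*c₀)^p := Real.rpow_pos_of_pos (by linarith) _
    positivity
  · apply inv_anti₀
    · have h14 : (0:ℝ) < (c₀/4)^p := Real.rpow_pos_of_pos (by linarith) _
      positivity
    · have h14 : (c₀/4:ℝ)^p ≤ (3/2*c₀)^p :=
        Real.rpow_le_rpow (by linarith) (by linarith) hp
      have hEn : E^n ≤ (2*E)^n := pow_le_pow_left₀ hE.le (by linarith) n
      have h1 : (0:ℝ) ≤ (c₀/4)^p := Real.rpow_nonneg (by linarith) _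
      have h2 : (0:ℝ) ≤ E^n := le_of_lt (by positivity)
      exact mul_le_mul_of_nonneg_right
        (mul_le_mul h14 hEn h2 (le_of_lt (by positivity : (0:ℝ) < (3/2*c₀)^p)))
        (by positivity)
  · exact lt_of_lt_of_le one_lt_two (le_max_left _ _)
  · intro r hr
    have hr2 : (2:ℝ) ≤ r := le_trans (le_max_left _ _) hr
    have hr1 : (1:ℝ) ≤ r := by linarith
    have hr0 : (0:ℝ) < r := by linarith
    -- the log bound
    have hlogT : T ≤ Real.log (1 + r^2) := by
      have h1 : Real.exp T ≤ r := le_trans (le_max_right _ _) hr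
      have h2 : T ≤ Real.log r := (Real.le_log_iff_exp_le hr0).mpr h1
      have h3 : Real.log r ≤ Real.log (1 + r^2) := Real.log_le_log hr0 (by nlinarith)
      linarith
    set A : ℝ := α + Real.log (1 + r^2) with hAdef
    have hApos : 0 < A := aL_pos hβ hαβ r
    have hTA : T ≤ A := by
      have : 0 ≤ Real.log (1 + r^2) := Real.log_nonneg (by nlinarith)
      simp only [hAdef]; linarith
    have key : ∀ M : ℝ, 0 ≤ M → ∀ e : ℝ, 0 < e → M ^ e⁻¹ ≤ T → M ≤ A ^ e := by
      intro M hM e he hMe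
      have h1 : M ^ e⁻¹ ≤ A := le_trans hMe hTA
      have h2 : (M ^ e⁻¹) ^ e ≤ A ^ e :=
        Real.rpow_le_rpow (Real.rpow_nonneg hM _) h1 he.le
      rwa [Real.rpow_inv_rpow hM he.ne'] at h2
    have hXr1 : 2 * X1 ≤ A ^ q := key _ (by linarith) q hq (le_trans (le_max_left _ _) (le_max_left _ _))
    have hXr2 : 2*K/c₀ ≤ A ^ q := key _ (by positivity) q hq (le_trans (le_max_right _ _) (le_max_left _ _))
    have hYr : 2*α^(β+1) ≤ A ^ (β+1) := key _ (by positivity) (β+1) hβ1 (le_max_right _ _)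
    have h2' : 2 * K ≤ c₀ * A ^ q := by
      rw [div_le_iff₀ hc₀] at hXr2; linarith [hXr2]
    obtain ⟨hρlow, hρhigh⟩ := rho_bounds hβ hαβ hr1 hXr1 h2'
    -- abbreviations
    have hXq : (0:ℝ) < A ^ q := Real.rpow_pos_of_pos hApos _
    have hρpos : 0 < rhoFJ α β r := lt_of_lt_of_le (by positivity) hρlow
    -- the key exponent identity
    have hXp : (A ^ q) ^ p = A ^ ((β+1) * (n:ℝ)) := by
      rw [← Real.rpow_mul hApos.le]
      congr 1
      rw [hqdef, hpdef]
      field_simp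
    have hYn : (A ^ (β+1)) ^ n = A ^ ((β+1) * (n:ℝ)) := by
      rw [← Real.rpow_natCast (A ^ (β+1)) n, ← Real.rpow_mul hApos.le]
    set Y : ℝ := A ^ (β+1) with hYdef
    have hYpos : 0 < Y := Real.rpow_pos_of_pos hApos _
    have hbpos : (0:ℝ) < α ^ (β+1) := Real.rpow_pos_of_pos hα _
    have hVeq : VFJ n α β r = ((Y - α^(β+1)) / E)^n / (2*n) := VFJ_eq hβ hαβ n hn r
    have hYb1 : Y/2 ≤ Y - α^(β+1) := by linarith
    have hYb2 : Y - α^(β+1) ≤ Y := by linarith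
    have h2n : (0:ℝ) < 2*(n:ℝ) := by linarith
    have hVlow : Y^n / ((2*E)^n * (2*(n:ℝ))) ≤ VFJ n α β r := by
      rw [hVeq, show Y^n/((2*E)^n*(2*(n:ℝ))) = (Y/(2*E))^n/(2*(n:ℝ)) by rw [div_pow]; ring]
      apply (div_le_div_iff_of_pos_right h2n).mpr
      apply pow_le_pow_left₀ (by positivity)
      rw [div_le_div_iff₀ (by positivity) hE]
      calc Y * E = (Y/2) * (2*E) := by ring
        _ ≤ (Y - α^(β+1)) * (2*E) := mul_le_mul_of_nonneg_right hYb1 (by positivity)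
    have hVhigh : VFJ n α β r ≤ Y^n / (E^n * (2*(n:ℝ))) := by
      rw [hVeq, show Y^n/(E^n*(2*(n:ℝ))) = (Y/E)^n/(2*(n:ℝ)) by rw [div_pow]; ring]
      apply (div_le_div_iff_of_pos_right h2n).mpr
      apply pow_le_pow_left₀ (div_nonneg (by linarith) hE.le)
      exact (div_le_div_iff_of_pos_right hE).mpr (by linarith)
    have hρp_up : rhoFJ α β r ^ p ≤ (3/2*c₀)^p * (A^q)^p := by
      rw [← Real.mul_rpow (by positivity) hXq.le]
      exact Real.rpow_le_rpow hρpos.le hρhigh hp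
    have hρp_low : (c₀/4)^p * (A^q)^p ≤ rhoFJ α β r ^ p := by
      rw [← Real.mul_rpow (by positivity) hXq.le]
      exact Real.rpow_le_rpow (by positivity) hρlow hp
    have hc3 : (0:ℝ) < (3/2*c₀)^p := Real.rpow_pos_of_pos (by linarith) _
    have hc4 : (0:ℝ) < (c₀/4)^p := Real.rpow_pos_of_pos (by linarith) _
    have h2E : (0:ℝ) < (2*E)^n := by positivity
    have hEn : (0:ℝ) < E^n := by positivity
    constructor
    · calc ((3/2*c₀)^p * (2*E)^n * (2*(n:ℝ)))⁻¹ * rhoFJ α β r ^ p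
          ≤ ((3/2*c₀)^p * (2*E)^n * (2*(n:ℝ)))⁻¹ * ((3/2*c₀)^p * (A^q)^p) :=
            mul_le_mul_of_nonneg_left hρp_up (by positivity)
        _ = (A^q)^p / ((2*E)^n * (2*(n:ℝ))) := by field_simp
        _ = Y^n / ((2*E)^n * (2*(n:ℝ))) := by rw [hXp, hYn]
        _ ≤ VFJ n α β r := hVlow
    · have hAX : (A^q)^p ≤ rhoFJ α β r ^ p / (c₀/4)^p := by
        rw [le_div_iff₀ hc4, mul_comm]; exact hρp_low
      calc VFJ n α β r ≤ Y^n / (E^n * (2*(n:ℝ))) := hVhigh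
        _ = (A^q)^p / (E^n * (2*(n:ℝ))) := by rw [hXp, hYn]
        _ ≤ (rhoFJ α β r ^ p / (c₀/4)^p) / (E^n * (2*(n:ℝ))) :=
            (div_le_div_iff_of_pos_right (by positivity)).mpr hAX
        _ = ((c₀/4)^p * E^n * (2*(n:ℝ)))⁻¹ * rhoFJ α β r ^ p := by
            rw [div_div, div_eq_mul_inv, mul_comm, ← mul_assoc]
end
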